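/- Let Φ_ε(t,x) = (4επt)^{-d/2} exp(−|x|²/(4εt)) be the heat kernel on ℝ^d and let φ ∈ 𝔑 with constant C_φ, 1 ≤ p < ∞. If C_φ √(4εt) ≤ 1, then for every u ∈ L^p(ℝ^d, φ): ‖Φ_ε(t) ⋆ u‖_{p,φ} ≤ κ_{1,d} ‖u‖_{p,φ}, where κ_{1,d} = c_{d−1} d α(d) / π^{d/2}, c_d = ∫_0^∞ ζ^d (1+ζ)² e^{ζ−ζ²} dζ, and α(d) is the volume of the unit ball in ℝ^d. -/

import Mathlib

open MeasureTheory Real Set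

lemma aux_gronwall {d : ℕ} {φ : EuclideanSpace ℝ (Fin d) → ℝ} {Cφ : ℝ}
    (hφ1 : ContDiff ℝ 1 φ) (hφ0 : ∀ x, 0 ≤ φ x)
    (hgrad : ∀ x, ‖gradient φ x‖ ≤ Cφ * φ x) (x y : EuclideanSpace ℝ (Fin d)) :
    φ x ≤ φ y * Real.exp (Cφ * ‖x - y‖) := by
  set L : ℝ → EuclideanSpace ℝ (Fin d) := fun s => y + s • (x - y) with hL
  have hdiff := hφ1.differentiable one_ne_zero
  have hLd : ∀ s : ℝ, HasDerivAt L (x - y) s := fun s => by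
    simpa only [one_smul, id] using ((hasDerivAt_id s).smul_const (x - y)).const_add y
  set f : ℝ → ℝ := fun s => φ (L s) with hf
  set f' : ℝ → ℝ := fun s => fderiv ℝ φ (L s) (x - y) with hf'
  have hfd : ∀ s : ℝ, HasDerivAt f (f' s) s := fun s =>
    ((hdiff (L s)).hasFDerivAt).comp_hasDerivAt s (hLd s)
  have hgnorm : ∀ z, ‖fderiv ℝ φ z‖ = ‖gradient φ z‖ := by
    intro z
    rw [gradient]
    rw [LinearIsometryEquiv.norm_map]
  have key : ∀ s ∈ Icc (0:ℝ) 1, ‖f s‖ ≤ gronwallBound (φ y) (Cφ * ‖x - y‖) 0 (s - 0) := by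
    apply norm_le_gronwallBound_of_norm_deriv_right_le
    · exact (hφ1.continuous.comp (by continuity : Continuous L)).continuousOn
    · exact fun s _ => (hfd s).hasDerivWithinAt
    · simp [hf, hL, Real.norm_eq_abs, abs_of_nonneg (hφ0 _)]
    · intro s _
      have h1 : ‖f' s‖ ≤ ‖fderiv ℝ φ (L s)‖ * ‖x - y‖ := (fderiv ℝ φ (L s)).le_opNorm _
      have h2 : ‖fderiv ℝ φ (L s)‖ ≤ Cφ * φ (L s) := (hgnorm (L s)) ▸ hgrad (L s)
      calc ‖f' s‖ ≤ (Cφ * φ (L s)) * ‖x - y‖ :=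
            h1.trans (by apply mul_le_mul_of_nonneg_right h2 (norm_nonneg _))
        _ = Cφ * ‖x - y‖ * ‖f s‖ + 0 := by
            rw [Real.norm_eq_abs, abs_of_nonneg (hφ0 _)]; ring
  have h1 := key 1 (by norm_num)
  rw [gronwallBound_ε0] at h1
  have : f 1 = φ x := by simp [hf, hL]
  rw [Real.norm_eq_abs] at h1
  calc φ x = f 1 := this.symm
    _ ≤ |f 1| := le_abs_self _
    _ ≤ φ y * Real.exp (Cφ * ‖x - y‖ * (1 - 0)) := h1
    _ = φ y * Real.exp (Cφ * ‖x - y‖) := by norm_num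

lemma aux_int_gauss {d : ℕ} {b : ℝ} (hb : 0 < b) :
    Integrable (fun z : EuclideanSpace ℝ (Fin d) => Real.exp (-b * ‖z‖ ^ 2)) := by
  have h := (GaussianFourier.integrable_cexp_neg_mul_sq_norm_add
      (V := EuclideanSpace ℝ (Fin d)) (b := (b:ℂ)) (by simpa using hb) 0 0).norm
  convert h using 2 with z
  simp [Complex.norm_exp]
  left; norm_cast

lemma aux_int_gauss_exp {d : ℕ} {b C : ℝ} (hb : 0 < b) (hC : 0 ≤ C) :
    Integrable (fun z : EuclideanSpace ℝ (Fin d) =>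
      Real.exp (-b * ‖z‖ ^ 2) * Real.exp (C * ‖z‖)) := by
  have hint := (aux_int_gauss (d := d) (b := b/2) (by positivity)).const_mul (Real.exp (C^2/(2*b)))
  refine Integrable.mono' hint ?_ ?_
  · apply Continuous.aestronglyMeasurable; continuity
  · filter_upwards with z
    rw [Real.norm_eq_abs, abs_of_nonneg (by positivity), ← Real.exp_add, ← Real.exp_add]
    apply Real.exp_le_exp.2
    have key : (2*b) * (C * ‖z‖) ≤ (2*b) * (b/2 * ‖z‖^2 + C^2/(2*b)) := by
      have h2 : (2*b) * (b/2 * ‖z‖^2 + C^2/(2*b)) = b^2*‖z‖^2 + C^2 := by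
        field_simp
      rw [h2]; nlinarith [sq_nonneg (b * ‖z‖ - C)]
    have : C * ‖z‖ ≤ b/2 * ‖z‖^2 + C^2/(2*b) := le_of_mul_le_mul_left key (by positivity)
    linarith

lemma aux_gauss_one {d : ℕ} {a : ℝ} (ha : 0 < a) :
    ∫ z : EuclideanSpace ℝ (Fin d),
      (Real.pi * a) ^ (-(d:ℝ)/2) * Real.exp (-‖z‖ ^ 2 / a) = 1 := by
  have h := GaussianFourier.integral_rexp_neg_mul_sq_norm
    (V := EuclideanSpace ℝ (Fin d)) (b := 1/a) (by positivity)
  rw [finrank_euclideanSpace_fin] at h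
  have hre : ∀ z : EuclideanSpace ℝ (Fin d), -‖z‖^2/a = -(1/a) * ‖z‖^2 := by
    intro z; field_simp
  simp_rw [hre]
  rw [integral_const_mul, h, show Real.pi/(1/a) = Real.pi * a by field_simp,
    ← Real.rpow_add (by positivity : 0 < Real.pi * a), show -(d:ℝ)/2 + (d:ℝ)/2 = 0 by ring,
    Real.rpow_zero]

lemma aux_c_int {d : ℕ} (hd : 1 ≤ d) :
    IntegrableOn (fun ζ : ℝ => ζ ^ ((d:ℝ)-1) * (1+ζ)^2 * Real.exp (ζ - ζ^2)) (Set.Ioi 0) := by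
  have g1 := Real.GammaIntegral_convergent (s := (d:ℝ)) (by exact_mod_cast hd)
  have g2 := Real.GammaIntegral_convergent (s := (d:ℝ)+1) (by positivity)
  have g3 := Real.GammaIntegral_convergent (s := (d:ℝ)+2) (by positivity)
  have hint := (((g1.add (g2.const_mul 2)).add g3).const_mul (Real.exp 1))
  refine Integrable.mono' hint ?_ ?_
  · apply ContinuousOn.aestronglyMeasurable ?_ measurableSet_Ioi
    apply ContinuousOn.mul
    apply ContinuousOn.mul
    · exact ContinuousOn.rpow_const continuousOn_id (fun x hx => Or.inl (ne_of_gt hx))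
    · exact (continuous_pow 2).comp (continuous_const.add continuous_id) |>.continuousOn
    · exact (Real.continuous_exp.comp (by continuity)).continuousOn
  · filter_upwards [ae_restrict_mem measurableSet_Ioi] with ζ hζ
    have h0 : (0:ℝ) < ζ := hζ
    have hA : (0:ℝ) ≤ ζ ^ ((d:ℝ)-1) := le_of_lt (Real.rpow_pos_of_pos h0 _)
    rw [Real.norm_eq_abs, abs_of_nonneg (by positivity)]
    have hexp : Real.exp (ζ - ζ^2) ≤ Real.exp 1 * Real.exp (-ζ) := by
      rw [← Real.exp_add]; apply Real.exp_le_exp.2; nlinarith [sq_nonneg (ζ-1)]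
    have e1 : ζ ^ ((d:ℝ)+1-1) = ζ ^ ((d:ℝ)-1) * ζ := by
      rw [show (d:ℝ)+1-1 = ((d:ℝ)-1) + 1 by ring, Real.rpow_add h0, Real.rpow_one]
    have e2 : ζ ^ ((d:ℝ)+2-1) = ζ ^ ((d:ℝ)-1) * ζ^2 := by
      rw [show (d:ℝ)+2-1 = ((d:ℝ)-1) + 2 by ring, Real.rpow_add h0,
        show (2:ℝ) = ((2:ℕ):ℝ) by norm_num, Real.rpow_natCast]
    calc ζ ^ ((d:ℝ)-1) * (1+ζ)^2 * Real.exp (ζ - ζ^2)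
        ≤ ζ ^ ((d:ℝ)-1) * (1+ζ)^2 * (Real.exp 1 * Real.exp (-ζ)) := by
          apply mul_le_mul_of_nonneg_left hexp (by positivity)
      _ = Real.exp 1 * (Real.exp (-ζ) * ζ ^ ((d:ℝ)-1) +
            2 * (Real.exp (-ζ) * (ζ ^ ((d:ℝ)-1) * ζ)) +
            Real.exp (-ζ) * (ζ ^ ((d:ℝ)-1) * ζ^2)) := by ring
      _ = Real.exp 1 * (Real.exp (-ζ) * ζ ^ ((d:ℝ)-1) +
            2 * (Real.exp (-ζ) * ζ ^ ((d:ℝ)+1-1)) +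
            Real.exp (-ζ) * ζ ^ ((d:ℝ)+2-1)) := by rw [e1, e2]

lemma aux_kernel_bound {d : ℕ} (hd : 1 ≤ d) {ε t Cφ : ℝ} (hε : 0 < ε) (ht : 0 < t)
    (hCφ : 0 ≤ Cφ) (hcond : Cφ * Real.sqrt (4 * ε * t) ≤ 1) :
    ∫ z : EuclideanSpace ℝ (Fin d),
        (Real.pi * (4*ε*t)) ^ (-(d:ℝ)/2) * Real.exp (-‖z‖^2/(4*ε*t)) * Real.exp (Cφ*‖z‖)
      ≤ (∫ ζ in Set.Ioi (0:ℝ), ζ ^ ((d:ℝ)-1) * (1+ζ)^2 * Real.exp (ζ - ζ^2)) *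
        ((d:ℝ) * (volume (Metric.ball (0:EuclideanSpace ℝ (Fin d)) 1)).toReal) /
        Real.pi ^ ((d:ℝ)/2) := by
  haveI : Nonempty (Fin d) := ⟨⟨0, by omega⟩⟩
  set α : ℝ := (volume (Metric.ball (0:EuclideanSpace ℝ (Fin d)) 1)).toReal with hα
  have hα0 : 0 ≤ α := ENNReal.toReal_nonneg
  set s : ℝ := Real.sqrt (4*ε*t) with hs
  have hs0 : 0 < s := Real.sqrt_pos.2 (by positivity)
  have hs2 : s^2 = 4*ε*t := Real.sq_sqrt (by positivity)
  set K : ℝ := (Real.pi * (4*ε*t)) ^ (-(d:ℝ)/2) with hK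
  have hK0 : 0 < K := Real.rpow_pos_of_pos (by positivity) _
  set f : ℝ → ℝ := fun r => K * Real.exp (-r^2/(4*ε*t)) * Real.exp (Cφ*r) with hf
  set c : ℝ := ∫ ζ in Set.Ioi (0:ℝ), ζ ^ ((d:ℝ)-1) * (1+ζ)^2 * Real.exp (ζ - ζ^2) with hc
  -- polar coordinates
  have hpolar : ∫ z : EuclideanSpace ℝ (Fin d), f ‖z‖ =
      (d:ℝ) * (α * ∫ r in Set.Ioi (0:ℝ), r ^ (d-1 : ℕ) * f r) := by
    rw [MeasureTheory.integral_fun_norm_addHaar volume f]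
    simp only [finrank_euclideanSpace_fin, nsmul_eq_mul, smul_eq_mul, ← hα]
    rfl
  -- substitution r = s ζ
  have hsub : ∫ r in Set.Ioi (0:ℝ), r ^ (d-1:ℕ) * f r
      = ∫ ζ in Set.Ioi (0:ℝ), s * ((s*ζ) ^ (d-1:ℕ) * f (s*ζ)) := by
    rw [integral_const_mul]
    rw [integral_comp_mul_left_Ioi (fun r => r ^ (d-1:ℕ) * f r) 0 hs0, mul_zero, smul_eq_mul,
      ← mul_assoc, mul_inv_cancel₀ hs0.ne', one_mul]
  -- constant identity
  have hsd : s ^ (d:ℕ) * K = Real.pi ^ (-(d:ℝ)/2) := by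
    rw [hK, ← hs2, Real.mul_rpow Real.pi_pos.le (by positivity),
      ← Real.rpow_natCast s 2, ← Real.rpow_natCast s d, ← Real.rpow_mul hs0.le,
      show ((2:ℕ):ℝ) * (-(d:ℝ)/2) = -(d:ℝ) by push_cast; ring]
    rw [mul_left_comm, ← Real.rpow_add hs0, show (d:ℝ) + -(d:ℝ) = 0 by ring,
      Real.rpow_zero, mul_one]
  -- pointwise bound on Ioi 0
  have hbound : ∀ ζ ∈ Set.Ioi (0:ℝ), s * ((s*ζ) ^ (d-1:ℕ) * f (s*ζ))
      ≤ Real.pi ^ (-(d:ℝ)/2) * (ζ ^ ((d:ℝ)-1) * (1+ζ)^2 * Real.exp (ζ - ζ^2)) := by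
    intro ζ hζ
    have h0 : (0:ℝ) < ζ := hζ
    have hexpeq : -(s*ζ)^2/(4*ε*t) = -ζ^2 := by
      rw [← hs2]; field_simp
    have heq : s * ((s*ζ) ^ (d-1:ℕ) * f (s*ζ))
        = Real.pi ^ (-(d:ℝ)/2) * (ζ ^ (d-1:ℕ) * (Real.exp (-ζ^2) * Real.exp (Cφ*(s*ζ)))) := by
      rw [hf]
      simp only []
      rw [hexpeq, mul_pow, ← hsd]
      rw [show s * (s ^ (d-1:ℕ) * ζ ^ (d-1:ℕ) * (K * Real.exp (-ζ^2) * Real.exp (Cφ*(s*ζ))))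
          = (s * s ^ (d-1:ℕ)) * K * (ζ ^ (d-1:ℕ) * (Real.exp (-ζ^2) * Real.exp (Cφ*(s*ζ)))) by ring]
      rw [← pow_succ']
      rw [show d - 1 + 1 = d by omega]
    rw [heq]
    have hrp : ζ ^ (d-1:ℕ) = ζ ^ ((d:ℝ)-1) := by
      rw [← Real.rpow_natCast ζ (d-1)]
      congr 1
      rw [Nat.cast_sub hd, Nat.cast_one]
    apply mul_le_mul_of_nonneg_left _ (le_of_lt (Real.rpow_pos_of_pos Real.pi_pos _))
    rw [hrp, ← Real.exp_add]
    calc ζ ^ ((d:ℝ)-1) * Real.exp (-ζ^2 + Cφ*(s*ζ))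
        ≤ ζ ^ ((d:ℝ)-1) * Real.exp (ζ - ζ^2) := by
          apply mul_le_mul_of_nonneg_left _ (le_of_lt (Real.rpow_pos_of_pos h0 _))
          apply Real.exp_le_exp.2
          have : Cφ * (s*ζ) ≤ 1 * ζ := by
            rw [← mul_assoc]
            exact mul_le_mul_of_nonneg_right hcond h0.le
          linarith
      _ ≤ ζ ^ ((d:ℝ)-1) * (1+ζ)^2 * Real.exp (ζ - ζ^2) := by
          have h1 : (1:ℝ) ≤ (1+ζ)^2 := by nlinarith
          have hA : (0:ℝ) ≤ ζ ^ ((d:ℝ)-1) * Real.exp (ζ - ζ^2) := by positivity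
          nlinarith [mul_le_mul_of_nonneg_left h1 hA]
  -- integral comparison
  have hcomp : ∫ ζ in Set.Ioi (0:ℝ), s * ((s*ζ) ^ (d-1:ℕ) * f (s*ζ))
      ≤ Real.pi ^ (-(d:ℝ)/2) * c := by
    rw [hc, ← integral_const_mul]
    apply integral_mono_of_nonneg
    · filter_upwards [ae_restrict_mem measurableSet_Ioi] with ζ hζ
      have h0 : (0:ℝ) < ζ := hζ
      have : (0:ℝ) < f (s*ζ) := by
        rw [hf]; positivity
      positivity
    · exact ((aux_c_int hd).const_mul _)
    · filter_upwards [ae_restrict_mem measurableSet_Ioi] with ζ hζ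
      exact hbound ζ hζ
  -- assemble
  show ∫ z : EuclideanSpace ℝ (Fin d), f ‖z‖ ≤ c * ((d:ℝ) * α) / Real.pi ^ ((d:ℝ)/2)
  rw [hpolar, hsub]
  have hπ : Real.pi ^ (-(d:ℝ)/2) = (Real.pi ^ ((d:ℝ)/2))⁻¹ := by
    rw [show -(d:ℝ)/2 = -((d:ℝ)/2) by ring, Real.rpow_neg Real.pi_pos.le]
  calc (d:ℝ) * (α * ∫ ζ in Set.Ioi (0:ℝ), s * ((s*ζ) ^ (d-1:ℕ) * f (s*ζ)))
      ≤ (d:ℝ) * (α * (Real.pi ^ (-(d:ℝ)/2) * c)) := by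
        apply mul_le_mul_of_nonneg_left _ (Nat.cast_nonneg d)
        exact mul_le_mul_of_nonneg_left hcomp hα0
    _ = c * ((d:ℝ) * α) / Real.pi ^ ((d:ℝ)/2) := by
        rw [hπ]; field_simp

lemma aux_est {d : ℕ} {K A p Cφ : ℝ} (hK : 0 < K) (hA : 0 < A) (hp : 1 ≤ p) (hCφ : 0 ≤ Cφ)
    (φ u : EuclideanSpace ℝ (Fin d) → ℝ)
    (hφc : Continuous φ) (hφ0 : ∀ x, 0 ≤ φ x)
    (hgrow : ∀ x y, φ x ≤ φ y * Real.exp (Cφ * ‖x - y‖))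
    (hum : AEStronglyMeasurable u volume)
    (hu : Integrable (fun x => |u x| ^ p * φ x))
    (hconvm : AEStronglyMeasurable
      (fun x => ∫ y, K * Real.exp (-‖x-y‖^2/A) * u y) volume)
    (hint1 : ∫ z : EuclideanSpace ℝ (Fin d), K * Real.exp (-‖z‖^2/A) = 1)
    (hIi : Integrable (fun z : EuclideanSpace ℝ (Fin d) =>
        K * Real.exp (-‖z‖^2/A) * Real.exp (Cφ * ‖z‖))) :
    ∫ x, |∫ y, K * Real.exp (-‖x-y‖^2/A) * u y| ^ p * φ x ≤
      (∫ z : EuclideanSpace ℝ (Fin d), K * Real.exp (-‖z‖^2/A) * Real.exp (Cφ * ‖z‖)) *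
      ∫ x, |u x| ^ p * φ x := by
  have hp0 : 0 < p := lt_of_lt_of_le one_pos hp
  set Φ : EuclideanSpace ℝ (Fin d) → ℝ := fun z => K * Real.exp (-‖z‖^2/A) with hΦdef
  have hΦpos : ∀ z, 0 < Φ z := fun z => by positivity
  have hΦcont : Continuous Φ := by
    apply continuous_const.mul
    apply Real.continuous_exp.comp
    continuity
  have hΦi : Integrable Φ := by
    refine hIi.mono' hΦcont.aestronglyMeasurable ?_
    filter_upwards with z
    rw [Real.norm_eq_abs, abs_of_nonneg (hΦpos z).le]
    show Φ z ≤ Φ z * Real.exp (Cφ * ‖z‖)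
    nlinarith [Real.one_le_exp (by positivity : (0:ℝ) ≤ Cφ * ‖z‖), hΦpos z]
  set W : EuclideanSpace ℝ (Fin d) → ENNReal := fun z => ENNReal.ofReal (Φ z) with hWdef
  have hWm : Measurable W := ENNReal.measurable_ofReal.comp hΦcont.measurable
  have hWne : ∀ z, W z ≠ 0 := fun z => by
    simp [hWdef, ENNReal.ofReal_eq_zero, not_le, hΦpos z]
  have hWnt : ∀ z, W z ≠ ⊤ := fun z => ENNReal.ofReal_ne_top
  set N : EuclideanSpace ℝ (Fin d) → ENNReal :=
    fun y => ENNReal.ofReal |u y| ^ p with hNdef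
  have hNm : AEMeasurable N volume :=
    (ENNReal.measurable_ofReal.comp_aemeasurable hum.norm.aemeasurable).pow_const _
  have hNnt : ∀ y, N y ≠ ⊤ :=
    fun y => ENNReal.rpow_ne_top_of_nonneg hp0.le ENNReal.ofReal_ne_top
  set Ψ : EuclideanSpace ℝ (Fin d) → ENNReal := fun x => ENNReal.ofReal (φ x) with hΨdef
  have hΨm : Measurable Ψ := ENNReal.measurable_ofReal.comp hφc.measurable
  have hΨnt : ∀ x, Ψ x ≠ ⊤ := fun x => ENNReal.ofReal_ne_top
  -- mass one
  have hW1 : ∀ x, ∫⁻ y, W (x - y) = 1 := by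
    intro x
    rw [(Measure.measurePreserving_sub_left volume x).lintegral_comp hWm]
    rw [hWdef]
    rw [← ofReal_integral_eq_lintegral_ofReal hΦi
      (Filter.Eventually.of_forall (fun z => (hΦpos z).le)), hint1, ENNReal.ofReal_one]
  -- pointwise: modulus of convolution
  have hconv : ∀ x, ENNReal.ofReal |∫ y, Φ (x - y) * u y|
      ≤ ∫⁻ y, W (x - y) * ENNReal.ofReal |u y| := by
    intro x
    rw [← Real.enorm_eq_ofReal_abs]
    refine (enorm_integral_le_lintegral_enorm _).trans (le_of_eq ?_)
    apply lintegral_congr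
    intro y
    rw [enorm_mul, Real.enorm_eq_ofReal_abs,
      Real.enorm_eq_ofReal_abs, abs_of_nonneg (hΦpos _).le]
  -- Jensen / Hölder
  have hjen : ∀ x, (∫⁻ y, W (x - y) * ENNReal.ofReal |u y|) ^ p
      ≤ ∫⁻ y, W (x - y) * N y := by
    intro x
    rcases eq_or_lt_of_le hp with heq | hlt
    · simp only [hNdef, ← heq, ENNReal.rpow_one, le_refl]
    · set q : ℝ := p / (p - 1) with hqdef
      have hpq : p.HolderConjugate q := Real.HolderConjugate.conjExponent hlt
      have hWxm : Measurable (fun y => W (x - y)) :=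
        hWm.comp (measurable_const.sub measurable_id)
      have hf : AEMeasurable (fun y => (W (x - y)) ^ (1/p) * ENNReal.ofReal |u y|) volume :=
        (hWxm.pow_const _).aemeasurable.mul
          (ENNReal.measurable_ofReal.comp_aemeasurable hum.norm.aemeasurable)
      have hg : AEMeasurable (fun y => (W (x - y)) ^ (1/q)) volume :=
        (hWxm.pow_const _).aemeasurable
      have key := ENNReal.lintegral_mul_le_Lp_mul_Lq volume hpq hf hg
      have h1 : ∀ y, (W (x - y)) ^ (1/p) * ENNReal.ofReal |u y| * (W (x - y)) ^ (1/q)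
          = W (x - y) * ENNReal.ofReal |u y| := by
        intro y
        rw [mul_right_comm, ← ENNReal.rpow_add _ _ (hWne _) (hWnt _),
          show 1/p + 1/q = 1 by rw [one_div, one_div]; exact hpq.inv_add_inv_eq_one, ENNReal.rpow_one]
      have h2 : ∀ y, ((W (x - y)) ^ (1/p) * ENNReal.ofReal |u y|) ^ p
          = W (x - y) * N y := by
        intro y
        rw [ENNReal.mul_rpow_of_nonneg _ _ hp0.le, ← ENNReal.rpow_mul,
          one_div, inv_mul_cancel₀ hp0.ne', ENNReal.rpow_one, hNdef]
      have h3 : ∀ y, ((W (x - y)) ^ (1/q)) ^ q = W (x - y) := by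
        intro y
        rw [← ENNReal.rpow_mul, one_div, inv_mul_cancel₀ hpq.symm.pos.ne',
          ENNReal.rpow_one]
      simp only [Pi.mul_apply] at key
      simp_rw [h1, h2, h3] at key
      rw [hW1 x, ENNReal.one_rpow, mul_one] at key
      calc (∫⁻ y, W (x - y) * ENNReal.ofReal |u y|) ^ p
          ≤ ((∫⁻ y, W (x - y) * N y) ^ (1/p)) ^ p :=
            ENNReal.rpow_le_rpow key hp0.le
        _ = ∫⁻ y, W (x - y) * N y := by
            rw [← ENNReal.rpow_mul, one_div, inv_mul_cancel₀ hp0.ne', ENNReal.rpow_one]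
  -- kernel integral
  set I : ℝ := ∫ z : EuclideanSpace ℝ (Fin d), Φ z * Real.exp (Cφ * ‖z‖) with hIdef
  have hI0 : 0 ≤ I := integral_nonneg fun z => by positivity
  have hIl : ∫⁻ z, W z * ENNReal.ofReal (Real.exp (Cφ * ‖z‖)) = ENNReal.ofReal I := by
    rw [hIdef, ofReal_integral_eq_lintegral_ofReal hIi
      (Filter.Eventually.of_forall (fun z => by positivity))]
    apply lintegral_congr; intro z
    rw [← ENNReal.ofReal_mul (hΦpos z).le]
  have hWem : Measurable (fun z : EuclideanSpace ℝ (Fin d) =>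
      W z * ENNReal.ofReal (Real.exp (Cφ * ‖z‖))) :=
    hWm.mul (ENNReal.measurable_ofReal.comp
      ((Real.continuous_exp.comp (continuous_const.mul continuous_norm)).measurable))
  have hker : ∀ y, ∫⁻ x, W (x - y) * Ψ x ≤ ENNReal.ofReal I * Ψ y := by
    intro y
    have hstep : ∀ x, W (x - y) * Ψ x
        ≤ (W (x - y) * ENNReal.ofReal (Real.exp (Cφ * ‖x - y‖))) * Ψ y := by
      intro x
      rw [mul_assoc]
      apply mul_le_mul_right
      calc Ψ x ≤ ENNReal.ofReal (φ y * Real.exp (Cφ * ‖x - y‖)) :=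
            ENNReal.ofReal_le_ofReal (hgrow x y)
        _ = ENNReal.ofReal (Real.exp (Cφ * ‖x - y‖)) * Ψ y := by
            simp only [hΨdef]
            rw [← ENNReal.ofReal_mul (Real.exp_nonneg _), mul_comm]
    calc ∫⁻ x, W (x - y) * Ψ x
        ≤ ∫⁻ x, (W (x - y) * ENNReal.ofReal (Real.exp (Cφ * ‖x - y‖))) * Ψ y :=
          lintegral_mono hstep
      _ = (∫⁻ x, W (x - y) * ENNReal.ofReal (Real.exp (Cφ * ‖x - y‖))) * Ψ y :=
          lintegral_mul_const' _ _ (hΨnt y)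
      _ = (∫⁻ z, W z * ENNReal.ofReal (Real.exp (Cφ * ‖z‖))) * Ψ y := by
          congr 1
          have := (measurePreserving_add_right volume (-y)).lintegral_comp hWem
          simp only [← sub_eq_add_neg] at this
          exact this
      _ = ENNReal.ofReal I * Ψ y := by rw [hIl]
  -- Tonelli
  have hmeas_prod : AEMeasurable (Function.uncurry fun x y :
      EuclideanSpace ℝ (Fin d) => W (x - y) * N y * Ψ x) (volume.prod volume) := by
    apply AEMeasurable.mul
    apply AEMeasurable.mul
    · exact (hWm.comp (measurable_fst.sub measurable_snd)).aemeasurable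
    · exact hNm.comp_snd
    · exact (hΨm.comp measurable_fst).aemeasurable
  have hswap : ∫⁻ x, (∫⁻ y, W (x - y) * N y) * Ψ x
      = ∫⁻ y, N y * ∫⁻ x, W (x - y) * Ψ x := by
    calc ∫⁻ x, (∫⁻ y, W (x - y) * N y) * Ψ x
        = ∫⁻ x, ∫⁻ y, W (x - y) * N y * Ψ x := by
          apply lintegral_congr; intro x
          exact (lintegral_mul_const' _ _ (hΨnt x)).symm
      _ = ∫⁻ y, ∫⁻ x, W (x - y) * N y * Ψ x := lintegral_lintegral_swap hmeas_prod
      _ = ∫⁻ y, N y * ∫⁻ x, W (x - y) * Ψ x := by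
          apply lintegral_congr; intro y
          rw [← lintegral_const_mul' _ _ (hNnt y)]
          apply lintegral_congr; intro x
          ring
  set B : ℝ := ∫ x, |u x| ^ p * φ x with hBdef
  have hB0 : 0 ≤ B := integral_nonneg fun x =>
    mul_nonneg (Real.rpow_nonneg (abs_nonneg _) p) (hφ0 x)
  have hNB : ∫⁻ y, N y * Ψ y = ENNReal.ofReal B := by
    rw [hBdef, ofReal_integral_eq_lintegral_ofReal hu (Filter.Eventually.of_forall
      (fun x => mul_nonneg (Real.rpow_nonneg (abs_nonneg _) p) (hφ0 x)))]
    apply lintegral_congr; intro y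
    simp only [hNdef, hΨdef]
    rw [ENNReal.ofReal_mul (Real.rpow_nonneg (abs_nonneg _) p),
      ENNReal.ofReal_rpow_of_nonneg (abs_nonneg _) hp0.le]
  -- main lintegral estimate
  have main : ∫⁻ x, ENNReal.ofReal (|∫ y, Φ (x - y) * u y| ^ p * φ x)
      ≤ ENNReal.ofReal (I * B) := by
    have h1 : ∀ x, ENNReal.ofReal (|∫ y, Φ (x - y) * u y| ^ p * φ x)
        ≤ (∫⁻ y, W (x - y) * N y) * Ψ x := by
      intro x
      rw [ENNReal.ofReal_mul (Real.rpow_nonneg (abs_nonneg _) p),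
        ← ENNReal.ofReal_rpow_of_nonneg (abs_nonneg _) hp0.le]
      apply mul_le_mul_left
      exact le_trans (ENNReal.rpow_le_rpow (hconv x) hp0.le) (hjen x)
    calc ∫⁻ x, ENNReal.ofReal (|∫ y, Φ (x - y) * u y| ^ p * φ x)
        ≤ ∫⁻ x, (∫⁻ y, W (x - y) * N y) * Ψ x := lintegral_mono h1
      _ = ∫⁻ y, N y * ∫⁻ x, W (x - y) * Ψ x := hswap
      _ ≤ ∫⁻ y, N y * (ENNReal.ofReal I * Ψ y) :=
          lintegral_mono fun y => mul_le_mul_right (hker y) _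
      _ = ENNReal.ofReal I * ∫⁻ y, N y * Ψ y := by
          rw [← lintegral_const_mul' _ _ ENNReal.ofReal_ne_top]
          apply lintegral_congr; intro y; ring
      _ = ENNReal.ofReal I * ENNReal.ofReal B := by rw [hNB]
      _ = ENNReal.ofReal (I * B) := (ENNReal.ofReal_mul hI0).symm
  -- back to Bochner integral
  have hfm : AEStronglyMeasurable (fun x => |∫ y, Φ (x - y) * u y| ^ p * φ x) volume := by
    apply AEStronglyMeasurable.mul _ hφc.aestronglyMeasurable
    have h2 : AEMeasurable (fun x => |∫ y, Φ (x - y) * u y|) volume := hconvm.norm.aemeasurable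
    exact ((Real.continuous_rpow_const hp0.le).measurable.comp_aemeasurable h2).aestronglyMeasurable
  have hfin : ∫ x, |∫ y, Φ (x - y) * u y| ^ p * φ x ≤ I * B := by
    rw [integral_eq_lintegral_of_nonneg_ae (Filter.Eventually.of_forall
      (fun x => mul_nonneg (Real.rpow_nonneg (abs_nonneg _) p) (hφ0 x))) hfm]
    exact ENNReal.toReal_le_of_le_ofReal (mul_nonneg hI0 hB0) main
  exact hfin

set_option maxHeartbeats 1000000 in
theorem stmt18 (d : ℕ) (hd : 1 ≤ d) (ε t Cφ p : ℝ)
    (hε : 0 < ε) (ht : 0 < t) (hp : 1 ≤ p)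
    (hcond : Cφ * Real.sqrt (4 * ε * t) ≤ 1)
    (φ : EuclideanSpace ℝ (Fin d) → ℝ) (hφ1 : ContDiff ℝ 1 φ)
    (hφ0 : ∀ x, 0 ≤ φ x) (hφi : Integrable φ) (hφne : φ ≠ 0) (hCφ : 0 ≤ Cφ)
    (hgrad : ∀ x, ‖gradient φ x‖ ≤ Cφ * φ x)
    (u : EuclideanSpace ℝ (Fin d) → ℝ)
    (hum : AEStronglyMeasurable u volume)
    (hu : Integrable (fun x => |u x| ^ p * φ x)) :
    (∫ x, |∫ y, (4 * ε * Real.pi * t) ^ (-(d : ℝ) / 2) *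
          Real.exp (-‖x - y‖ ^ 2 / (4 * ε * t)) * u y| ^ p * φ x) ^ (1 / p) ≤
      ((∫ ζ in Set.Ioi (0 : ℝ), ζ ^ ((d : ℝ) - 1) * (1 + ζ) ^ 2 * Real.exp (ζ - ζ ^ 2)) *
          ((d : ℝ) * (volume (Metric.ball (0 : EuclideanSpace ℝ (Fin d)) 1)).toReal) /
          Real.pi ^ ((d : ℝ) / 2)) *
        (∫ x, |u x| ^ p * φ x) ^ (1 / p) := by
  have hp0 : (0:ℝ) < p := lt_of_lt_of_le one_pos hp
  have h4 : (0:ℝ) < 4*ε*t := by positivity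
  have hbase : Real.pi*(4*ε*t) = 4 * ε * Real.pi * t := by ring
  have hK : (0:ℝ) < (4 * ε * Real.pi * t) ^ (-(d:ℝ)/2) :=
    Real.rpow_pos_of_pos (by positivity) _
  have hconvm : AEStronglyMeasurable
      (fun x => ∫ y, (4 * ε * Real.pi * t) ^ (-(d:ℝ)/2) *
        Real.exp (-‖x-y‖^2/(4*ε*t)) * u y) volume := by
    apply AEStronglyMeasurable.integral_prod_right'
      (f := fun z : EuclideanSpace ℝ (Fin d) × EuclideanSpace ℝ (Fin d) =>
        (4 * ε * Real.pi * t) ^ (-(d:ℝ)/2) * Real.exp (-‖z.1-z.2‖^2/(4*ε*t)) * u z.2)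
    apply AEStronglyMeasurable.mul
    · exact Continuous.aestronglyMeasurable (by continuity)
    · exact hum.comp_snd
  have hgrow : ∀ x y, φ x ≤ φ y * Real.exp (Cφ * ‖x - y‖) :=
    aux_gronwall hφ1 hφ0 hgrad
  have hint1 : ∫ z : EuclideanSpace ℝ (Fin d),
      (4 * ε * Real.pi * t) ^ (-(d:ℝ)/2) * Real.exp (-‖z‖^2/(4*ε*t)) = 1 := by
    rw [← hbase]; exact aux_gauss_one h4
  have hIi : Integrable (fun z : EuclideanSpace ℝ (Fin d) =>
      (4 * ε * Real.pi * t) ^ (-(d:ℝ)/2) * Real.exp (-‖z‖^2/(4*ε*t)) *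
        Real.exp (Cφ * ‖z‖)) := by
    have h := (aux_int_gauss_exp (d:=d) (b := 1/(4*ε*t)) (C := Cφ) (by positivity)
      hCφ).const_mul ((4 * ε * Real.pi * t) ^ (-(d:ℝ)/2))
    apply h.congr
    filter_upwards with z
    rw [show -(1/(4*ε*t)) * ‖z‖^2 = -‖z‖^2/(4*ε*t) by field_simp, ← mul_assoc]
  have hΦi : Integrable (fun z : EuclideanSpace ℝ (Fin d) =>
      (4 * ε * Real.pi * t) ^ (-(d:ℝ)/2) * Real.exp (-‖z‖^2/(4*ε*t))) := by
    refine hIi.mono' (Continuous.aestronglyMeasurable (by continuity)) ?_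
    filter_upwards with z
    rw [Real.norm_eq_abs, abs_of_nonneg (by positivity)]
    nlinarith [Real.one_le_exp (by positivity : (0:ℝ) ≤ Cφ*‖z‖),
      (by positivity : (0:ℝ) < (4 * ε * Real.pi * t) ^ (-(d:ℝ)/2) *
        Real.exp (-‖z‖^2/(4*ε*t)))]
  set I : ℝ := ∫ z : EuclideanSpace ℝ (Fin d),
      (4 * ε * Real.pi * t) ^ (-(d:ℝ)/2) * Real.exp (-‖z‖^2/(4*ε*t)) *
        Real.exp (Cφ * ‖z‖) with hIdef
  have hI1 : (1:ℝ) ≤ I := by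
    rw [hIdef, ← hint1]
    apply integral_mono hΦi hIi
    intro z
    nlinarith [Real.one_le_exp (by positivity : (0:ℝ) ≤ Cφ*‖z‖),
      (by positivity : (0:ℝ) < (4 * ε * Real.pi * t) ^ (-(d:ℝ)/2) *
        Real.exp (-‖z‖^2/(4*ε*t)))]
  have hI0 : (0:ℝ) ≤ I := le_trans zero_le_one hI1
  have hκ := aux_kernel_bound (d:=d) hd hε ht hCφ hcond
  rw [hbase] at hκ
  have hest := aux_est hK h4 hp hCφ φ u hφ1.continuous hφ0 hgrow hum hu hconvm hint1 hIi
  set B : ℝ := ∫ x, |u x| ^ p * φ x with hB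
  have hB0 : 0 ≤ B := integral_nonneg fun x =>
    mul_nonneg (Real.rpow_nonneg (abs_nonneg _) p) (hφ0 x)
  have hL0 : 0 ≤ ∫ x, |∫ y, (4 * ε * Real.pi * t) ^ (-(d:ℝ)/2) *
      Real.exp (-‖x-y‖^2/(4*ε*t)) * u y| ^ p * φ x := integral_nonneg fun x =>
    mul_nonneg (Real.rpow_nonneg (abs_nonneg _) p) (hφ0 x)
  calc (∫ x, |∫ y, (4 * ε * Real.pi * t) ^ (-(d:ℝ)/2) *
          Real.exp (-‖x-y‖^2/(4*ε*t)) * u y| ^ p * φ x) ^ (1/p)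
      ≤ (I * B) ^ (1/p) := Real.rpow_le_rpow hL0 hest (by positivity)
    _ = I ^ (1/p) * B ^ (1/p) := Real.mul_rpow hI0 hB0
    _ ≤ I * B ^ (1/p) := by
        apply mul_le_mul_of_nonneg_right _ (Real.rpow_nonneg hB0 _)
        calc I ^ (1/p) ≤ I ^ (1:ℝ) := Real.rpow_le_rpow_of_exponent_le hI1
              (by rw [div_le_one hp0]; exact hp)
          _ = I := Real.rpow_one I
    _ ≤ ((∫ ζ in Set.Ioi (0 : ℝ), ζ ^ ((d : ℝ) - 1) * (1 + ζ) ^ 2 * Real.exp (ζ - ζ ^ 2)) *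
          ((d : ℝ) * (volume (Metric.ball (0 : EuclideanSpace ℝ (Fin d)) 1)).toReal) /
          Real.pi ^ ((d : ℝ) / 2)) * B ^ (1/p) :=
        mul_le_mul_of_nonneg_right hκ (Real.rpow_nonneg hB0 _)
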